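/- Let F be a field with char(F) ≠ 2, G a group, σ : G → {±1} a group homomorphism, and * an involution on G. The map ⊛ on FG defined by (Σ α_g g)⊛ = Σ α_g σ(g) g* is an algebra involution on FG if and only if gg* ∈ ker(σ) for all g ∈ G. -/

import Mathlib

/-- The oriented involution on the group algebra: `(Σ α_g g)⊛ = Σ α_g σ(g) g*`. -/
noncomputable def oinvMap {F G : Type*} [Field F] [Group G] (st : G → G) (σ : G → F) :
    MonoidAlgebra F G → MonoidAlgebra F G :=
  fun α => Finsupp.sum α.coeff fun g c => MonoidAlgebra.single (st g) (σ g * c)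

lemma oinv_single {F G : Type*} [Field F] [Group G] (st : G → G) (σ : G → F) (g : G) (c : F) :
    oinvMap st σ (MonoidAlgebra.single g c) = MonoidAlgebra.single (st g) (σ g * c) := by
  unfold oinvMap
  rw [MonoidAlgebra.coeff_single]
  exact Finsupp.sum_single_index (by simp)

lemma oinv_zero {F G : Type*} [Field F] [Group G] (st : G → G) (σ : G → F) :
    oinvMap st σ 0 = 0 := by
  unfold oinvMap; simp

lemma oinv_add {F G : Type*} [Field F] [Group G] (st : G → G) (σ : G → F)
    (α β : MonoidAlgebra F G) :
    oinvMap st σ (α + β) = oinvMap st σ α + oinvMap st σ β := by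
  unfold oinvMap
  rw [MonoidAlgebra.coeff_add]
  exact Finsupp.sum_add_index' (by simp) (by intro a b₁ b₂; rw [mul_add, MonoidAlgebra.single_add])

theorem stmt_9 {F G : Type*} [Field F] [Group G] (h2 : (2 : F) ≠ 0)
    (st : G → G) (hanti : ∀ g h : G, st (g * h) = st h * st g)
    (hinvol : ∀ g : G, st (st g) = g)
    (σ : G → F) (hhom : ∀ g h : G, σ (g * h) = σ g * σ h)
    (hval : ∀ g : G, σ g = 1 ∨ σ g = -1) :
    ((∀ α β : MonoidAlgebra F G, oinvMap st σ (α * β) = oinvMap st σ β * oinvMap st σ α) ∧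
        (∀ α : MonoidAlgebra F G, oinvMap st σ (oinvMap st σ α) = α)) ↔
      ∀ g : G, σ (g * st g) = 1 := by
  constructor
  · rintro ⟨-, hinv⟩ g
    have h := hinv (MonoidAlgebra.single g 1)
    rw [oinv_single, oinv_single, hinvol] at h
    have h' := congrArg (fun f : MonoidAlgebra F G => f.coeff g) h
    simp [MonoidAlgebra.coeff_single] at h'
    rw [hhom, mul_comm, h']
  · intro hker
    have key : ∀ g : G, σ (st g) * σ g = 1 := by
      intro g
      have := hker g
      rw [hhom] at this
      rwa [mul_comm]
    constructor
    · intro α β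
      induction α using MonoidAlgebra.induction_linear with
      | zero => simp [oinv_zero]
      | add a b ha hb => rw [add_mul, oinv_add, ha, hb, oinv_add, mul_add]
      | single g c =>
        induction β using MonoidAlgebra.induction_linear with
        | zero => simp [oinv_zero]
        | add a b ha hb => rw [mul_add, oinv_add, ha, hb, oinv_add, add_mul]
        | single h d =>
          show oinvMap st σ (MonoidAlgebra.single g c * MonoidAlgebra.single h d) = _
          rw [MonoidAlgebra.single_mul_single, oinv_single, oinv_single, oinv_single]
          show (MonoidAlgebra.single (st (g*h)) (σ (g*h) * (c*d)) : MonoidAlgebra F G) = _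
          rw [MonoidAlgebra.single_mul_single, hanti, hhom]
          ring_nf
    · intro α
      induction α using MonoidAlgebra.induction_linear with
      | zero => simp [oinv_zero]
      | add a b ha hb => rw [oinv_add, oinv_add, ha, hb]
      | single g c =>
        rw [oinv_single, oinv_single, hinvol, ← mul_assoc, key, one_mul]
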